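/- Let P be the Heisenberg group over a finite field F of characteristic p, and let λ ∈ F^× have odd order. Then the automorphism (a,b,c) ↦ (λa, λb, λ²c) of P is fixed-point-free on nonidentity elements (i.e., the cyclic group ⟨λ⟩ acts Frobeniusly on P) whenever λ ≠ 1. -/

import Mathlib

variable (F : Type*) [Field F]

/-- The Heisenberg group over `F`: triples `(a, b, c)` corresponding to the
upper unitriangular matrix `[[1,a,c],[0,1,b],[0,0,1]]`. -/
def Heisenberg := F × F × F

namespace Heisenberg

variable {F}

instance : Mul (Heisenberg F) := ⟨fun x y => (x.1 + y.1, x.2.1 + y.2.1, x.2.2 + y.2.2 + x.1 * y.2.1)⟩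
instance : One (Heisenberg F) := ⟨((0 : F), (0 : F), (0 : F))⟩
instance : Inv (Heisenberg F) := ⟨fun x => (-x.1, -x.2.1, -x.2.2 + x.1 * x.2.1)⟩

lemma mul_def (x y : Heisenberg F) :
    x * y = (x.1 + y.1, x.2.1 + y.2.1, x.2.2 + y.2.2 + x.1 * y.2.1) := rfl
lemma one_def : (1 : Heisenberg F) = ((0 : F), (0 : F), (0 : F)) := rfl
lemma inv_def (x : Heisenberg F) : x⁻¹ = (-x.1, -x.2.1, -x.2.2 + x.1 * x.2.1) := rfl

instance : Group (Heisenberg F) :=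
  Group.ofLeftAxioms
    (fun x y z => by
      simp only [mul_def]
      show ((x.1 + y.1) + z.1, (x.2.1 + y.2.1) + z.2.1,
          (x.2.2 + y.2.2 + x.1 * y.2.1) + z.2.2 + (x.1 + y.1) * z.2.1) =
        (x.1 + (y.1 + z.1), x.2.1 + (y.2.1 + z.2.1),
          x.2.2 + (y.2.2 + z.2.2 + y.1 * z.2.1) + x.1 * (y.2.1 + z.2.1))
      refine Prod.ext ?_ (Prod.ext ?_ ?_) <;> simp <;> ring)
    (fun x => by
      simp only [mul_def, one_def]
      show ((0 : F) + x.1, (0 : F) + x.2.1, (0 : F) + x.2.2 + 0 * x.2.1) = (x.1, x.2.1, x.2.2)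
      refine Prod.ext ?_ (Prod.ext ?_ ?_) <;> simp)
    (fun x => by
      simp only [mul_def, one_def, inv_def]
      show (-x.1 + x.1, -x.2.1 + x.2.1, (-x.2.2 + x.1 * x.2.1) + x.2.2 + -x.1 * x.2.1) =
        ((0 : F), (0 : F), (0 : F))
      refine Prod.ext ?_ (Prod.ext ?_ ?_) <;> simp <;> ring_nf)

end Heisenberg

/-- Let `P` be the Heisenberg group over a finite field `F` of characteristic `p`,
and let `λ ∈ Fˣ` have odd order.  Then for every `μ ≠ 1` in `⟨λ⟩`, the automorphism
`(a, b, c) ↦ (μa, μb, μ²c)` of `P` fixes no nonidentity element; i.e. `⟨λ⟩` acts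
Frobeniusly on `P`. -/
theorem heisenberg_frobenius_action (p : ℕ) (hp : p.Prime)
    [Fintype F] [CharP F p] (lam : Fˣ) (hodd : Odd (orderOf lam)) (hne : lam ≠ 1) :
    ∀ mu : Fˣ, mu ∈ Subgroup.zpowers lam → mu ≠ 1 →
      ∀ x : Heisenberg F,
        (((mu * x.1, mu * x.2.1, mu ^ 2 * x.2.2)) : Heisenberg F) = x → x = 1 := by
  intro mu hmu hmu1 x hx
  have h1 : (mu : F) ≠ 1 := by
    intro h; exact hmu1 (Units.ext h)
  have hsq : mu ^ 2 ≠ 1 := by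
    intro h
    have hdvd : orderOf mu ∣ 2 := orderOf_dvd_of_pow_eq_one h
    have hoddmu : Odd (orderOf mu) :=
      hodd.of_dvd_nat (orderOf_dvd_of_mem_zpowers hmu)
    have h1' : orderOf mu = 1 :=
      (hoddmu.coprime_two_right).eq_one_of_dvd hdvd
    exact hmu1 (orderOf_eq_one_iff.mp h1')
  have h2 : ((mu : F)) ^ 2 ≠ 1 := by
    intro h; exact hsq (Units.ext (by push_cast; exact h))
  obtain ⟨ha, hb, hc⟩ : (mu : F) * x.1 = x.1 ∧ (mu : F) * x.2.1 = x.2.1 ∧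
      ((mu : F)) ^ 2 * x.2.2 = x.2.2 := by
    have : ((mu * x.1, mu * x.2.1, mu ^ 2 * x.2.2) : F × F × F) = x := hx
    replace this := And.intro (congrArg Prod.fst this) (Prod.ext_iff.mp (congrArg Prod.snd this))
    exact ⟨this.1, this.2.1, by push_cast at this ⊢; exact this.2.2⟩
  have fa : x.1 = 0 := by
    by_contra h
    exact h1 (mul_right_cancel₀ h (by rw [ha, one_mul]))
  have fb : x.2.1 = 0 := by
    by_contra h
    exact h1 (mul_right_cancel₀ h (by rw [hb, one_mul]))
  have fc : x.2.2 = 0 := by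
    by_contra h
    exact h2 (mul_right_cancel₀ h (by rw [hc, one_mul]))
  show x = ((0 : F), (0 : F), (0 : F))
  exact Prod.ext fa (Prod.ext fb fc)
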